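/- For every natural number k, the function x ↦ x^k on ℍ satisfies ∂̄_CRF(x^k) = −2 Z̃_{k-1}(x), where ∂̄_CRF = ∂/∂x₀ + i ∂/∂x₁ + j ∂/∂x₂ + k ∂/∂x₃ is the Cauchy–Riemann–Fueter operator and Z̃_{k-1} is the zonal harmonic defined by Z̃_{-1}=0, Z̃_0=1, Z̃_k(x) = 2Re(x) Z̃_{k-1}(x) − |x|² Z̃_{k-2}(x). -/

import Mathlib

noncomputable def qi : Quaternion ℝ := ⟨0, 1, 0, 0⟩
noncomputable def qj : Quaternion ℝ := ⟨0, 0, 1, 0⟩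
noncomputable def qk : Quaternion ℝ := ⟨0, 0, 0, 1⟩

/-- `zonal (k+1) = Z̃_k`, with `zonal 0 = Z̃_{-1} = 0`, `zonal 1 = Z̃_0 = 1`, and
`Z̃_k(x) = 2 Re(x) Z̃_{k-1}(x) − |x|² Z̃_{k-2}(x)`. -/
noncomputable def zonal : ℕ → Quaternion ℝ → ℝ
  | 0, _ => 0
  | 1, _ => 1
  | (k + 2), x => 2 * x.re * zonal (k + 1) x - ‖x‖ ^ 2 * zonal k x

/-- The Cauchy–Riemann–Fueter operator `∂̄ = ∂/∂x₀ + i ∂/∂x₁ + j ∂/∂x₂ + k ∂/∂x₃`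
applied to an `ℍ`-valued function. -/
noncomputable def CRF (f : Quaternion ℝ → Quaternion ℝ) (x : Quaternion ℝ) : Quaternion ℝ :=
  fderiv ℝ f x 1 + qi * fderiv ℝ f x qi + qj * fderiv ℝ f x qj + qk * fderiv ℝ f x qk

lemma quat_key (a : Quaternion ℝ) : a + qi*a*qi + qj*a*qj + qk*a*qk = -2 * star a := by
  have h2 : (2 : Quaternion ℝ) = ((2:ℝ) : Quaternion ℝ) := by exact_mod_cast rfl
  ext <;> simp [h2, Quaternion.re_mul, Quaternion.imI_mul, Quaternion.imJ_mul,
    Quaternion.imK_mul] <;> simp [qi, qj, qk] <;> ring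

/-- The Fréchet derivative of `y ↦ y ^ k` at `x`: `v ↦ ∑ xⁱ v x^(k-1-i)`. -/
noncomputable def Dq (k : ℕ) (x : Quaternion ℝ) : Quaternion ℝ →L[ℝ] Quaternion ℝ :=
  ∑ i ∈ Finset.range k, ContinuousLinearMap.mulLeftRight ℝ (Quaternion ℝ) (x ^ i) (x ^ (k - 1 - i))

lemma hasFDerivAt_pow_q (k : ℕ) (x : Quaternion ℝ) :
    HasFDerivAt (fun y : Quaternion ℝ => y ^ k) (Dq k x) x := by
  induction k with
  | zero =>
    simpa [Dq] using hasFDerivAt_const (1 : Quaternion ℝ) x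
  | succ k ih =>
    have h := ih.mul' (hasFDerivAt_id x)
    have heq : ((fun y : Quaternion ℝ => y ^ k) * id) = fun y => y ^ (k+1) := by
      funext y; rw [pow_succ]; rfl
    rw [heq] at h
    have hDq : Dq (k+1) x
        = x ^ k • ContinuousLinearMap.id ℝ (Quaternion ℝ) + MulOpposite.op (id x) • Dq k x := by
      refine ContinuousLinearMap.ext fun v => ?_
      simp only [Dq, ContinuousLinearMap.sum_apply, ContinuousLinearMap.mulLeftRight_apply,
        ContinuousLinearMap.add_apply, ContinuousLinearMap.smul_apply,
        ContinuousLinearMap.smulRight_apply, ContinuousLinearMap.id_apply, smul_eq_mul,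
        MulOpposite.smul_eq_mul_unop, MulOpposite.unop_op]
      rw [Finset.sum_range_succ]
      simp only [Nat.add_sub_cancel]
      rw [Nat.sub_self, pow_zero, mul_one, Finset.sum_mul]
      rw [add_comm]
      congr 1
      refine Finset.sum_congr rfl fun i hi => ?_
      have hik : i < k := Finset.mem_range.mp hi
      have : k - i = (k - 1 - i) + 1 := by omega
      rw [this, pow_succ, id]
      simp [mul_assoc]
    rw [hDq]
    exact h

lemma zonal_sum (k : ℕ) (x : Quaternion ℝ) :
    ((zonal k x : ℝ) : Quaternion ℝ)
      = ∑ i ∈ Finset.range k, (star x) ^ i * x ^ (k - 1 - i) := by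
  induction k using Nat.twoStepInduction with
  | zero => simp [zonal]
  | one => simp [zonal]
  | more k ih1 ih2 =>
    set s := star x with hs
    have e1 : ∀ n : ℕ, (∑ i ∈ Finset.range (n+1), s ^ i * x ^ (n - i))
        = s * (∑ i ∈ Finset.range n, s ^ i * x ^ (n - 1 - i)) + x ^ n := by
      intro n
      rw [Finset.sum_range_succ', Finset.mul_sum]
      simp only [pow_zero, one_mul, Nat.sub_zero]
      congr 1
      refine Finset.sum_congr rfl fun i _ => ?_
      have hni : n - (i+1) = n - 1 - i := by omega
      rw [hni, pow_succ']
      rw [mul_assoc]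
    have ih2' : ((zonal (k+1) x : ℝ) : Quaternion ℝ)
        = ∑ i ∈ Finset.range (k+1), s ^ i * x ^ (k - i) := by
      simpa only [show k+1-1 = k from rfl] using ih2
    have hz1 : ((zonal (k+1) x : ℝ) : Quaternion ℝ)
        = s * ((zonal k x : ℝ) : Quaternion ℝ) + x ^ k := by
      rw [ih2', e1 k, ih1]
    have hxk1 : x ^ (k+1)
        = x * ((zonal (k+1) x : ℝ) : Quaternion ℝ)
          - (x * s) * ((zonal k x : ℝ) : Quaternion ℝ) := by
      rw [pow_succ']
      have : x ^ k = ((zonal (k+1) x : ℝ) : Quaternion ℝ)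
          - s * ((zonal k x : ℝ) : Quaternion ℝ) := by rw [hz1]; noncomm_ring
      rw [this, mul_sub, mul_assoc]
    have hrec : zonal (k+2) x = 2 * x.re * zonal (k+1) x - ‖x‖^2 * zonal k x := rfl
    have hsum : (∑ i ∈ Finset.range (k+2), s ^ i * x ^ (k+2-1-i))
        = s * (∑ i ∈ Finset.range (k+1), s ^ i * x ^ (k+1-1-i)) + x ^ (k+1) := by
      simpa only [show k+2-1 = k+1 from rfl] using e1 (k+1)
    rw [hsum, ← ih2, hxk1]
    have hxs : x * s = ((‖x‖^2 : ℝ) : Quaternion ℝ) := by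
      rw [hs, Quaternion.self_mul_star, Quaternion.normSq_eq_norm_mul_self, sq]
    have hsx : s * ((zonal (k+1) x : ℝ) : Quaternion ℝ)
          + x * ((zonal (k+1) x : ℝ) : Quaternion ℝ)
        = (((2 * x.re : ℝ)) : Quaternion ℝ) * ((zonal (k+1) x : ℝ) : Quaternion ℝ) := by
      rw [← add_mul, hs, Quaternion.star_add_self']
    rw [hrec]
    push_cast
    rw [← add_sub_assoc, hsx, hxs]
    push_cast
    ring_nf

/-- For every `k`, `∂̄_CRF (x^k) = −2 Z̃_{k-1}(x)`. -/
theorem CRF_pow (k : ℕ) (x : Quaternion ℝ) :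
    CRF (fun y => y ^ k) x = -2 * ((zonal k x : ℝ) : Quaternion ℝ) := by
  have hf := (hasFDerivAt_pow_q k x).fderiv
  rw [CRF, hf]
  simp only [Dq, ContinuousLinearMap.sum_apply, ContinuousLinearMap.mulLeftRight_apply,
    Finset.mul_sum]
  rw [zonal_sum, Finset.mul_sum]
  rw [← Finset.sum_add_distrib, ← Finset.sum_add_distrib, ← Finset.sum_add_distrib]
  refine Finset.sum_congr rfl fun i _ => ?_
  have h := quat_key (x ^ i)
  calc x^i * 1 * x^(k-1-i) + qi * (x^i * qi * x^(k-1-i)) + qj * (x^i * qj * x^(k-1-i))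
        + qk * (x^i * qk * x^(k-1-i))
      = (x^i + qi*x^i*qi + qj*x^i*qj + qk*x^i*qk) * x^(k-1-i) := by noncomm_ring
    _ = (-2 * star (x^i)) * x^(k-1-i) := by rw [h]
    _ = -2 * ((star x)^i * x^(k-1-i)) := by rw [star_pow]; noncomm_ring
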